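/- Let n ≥ 1 and define P : ℝ → ℝ^{4n} → ℝ³ → ℂ by P t x z := ∫_{τ ∈ ℝ³} exp( -( i·⟨τ, z⟩ + (1/2)·‖τ‖·(cosh ‖τ‖ / sinh ‖τ‖)·‖x‖² ) / t ) · ( ‖τ‖ / sinh ‖τ‖ )^{2n} dτ. Let 0 < s < 1, let α, β, γ, δ ∈ {1,…,4n} with α ≠ β and γ ≠ δ, and let i, j ∈ {1,2,3}. Then ∫_{(x,z) ∈ ℝ^{4n} × ℝ³} P (1-s) x z · x_α² · x_β² · (∂_{z_i}² P) s x z d(x,z) = ∫_{(x,z) ∈ ℝ^{4n} × ℝ³} P (1-s) x z · x_γ² · x_δ² · (∂_{z_j}² P) s x z d(x,z); that is, this fourth-moment integral does not depend on the choice of the distinct horizontal indices nor on the vertical index. Here ∂_{z_i}²P s x z denotes the second-order partial derivative of z ↦ P s x z taken twice in the i-th coordinate direction, x_α is the α-th coordinate of x, and the integrals are over ℝ^{4n} × ℝ³ with Lebesgue measure. -/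

import Mathlib

open RealInnerProductSpace MeasureTheory

/-- The Beals–Gaveau–Greiner heat kernel (unnormalized) of the intrinsic sublaplacian on
the quaternionic Heisenberg group. -/
noncomputable def bggKernel (n : ℕ) (t : ℝ) (x : EuclideanSpace ℝ (Fin (4 * n)))
    (z : EuclideanSpace ℝ (Fin 3)) : ℂ :=
  ∫ τ : EuclideanSpace ℝ (Fin 3),
    Complex.exp (-((Complex.I * ((⟪τ, z⟫ : ℝ) : ℂ) +
        (((1 / 2 : ℝ) * ‖τ‖ * (Real.cosh ‖τ‖ / Real.sinh ‖τ‖) * ‖x‖ ^ 2 : ℝ) : ℂ)) /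
        (t : ℂ))) *
      (((‖τ‖ / Real.sinh ‖τ‖ : ℝ) : ℂ)) ^ (2 * n)

/-- The kernel depends on `x` only through its norm. -/
lemma bgg_norm_congr {n : ℕ} {t : ℝ} {x x' : EuclideanSpace ℝ (Fin (4 * n))}
    (h : ‖x'‖ = ‖x‖) (z : EuclideanSpace ℝ (Fin 3)) :
    bggKernel n t x' z = bggKernel n t x z := by
  unfold bggKernel; rw [h]

/-- The kernel is invariant under linear isometries in the `z` variable. -/
lemma bgg_isometry (n : ℕ) (t : ℝ) (x : EuclideanSpace ℝ (Fin (4 * n)))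
    (E : EuclideanSpace ℝ (Fin 3) ≃ₗᵢ[ℝ] EuclideanSpace ℝ (Fin 3))
    (z : EuclideanSpace ℝ (Fin 3)) :
    bggKernel n t x (E z) = bggKernel n t x z := by
  unfold bggKernel
  rw [← E.measurePreserving.integral_comp E.toHomeomorph.measurableEmbedding]
  congr 1
  funext τ
  rw [E.inner_map_map, E.norm_map]

/-- Transfer of `fderiv` along a linear isometry equivalence. -/
lemma fderiv_comp_isom {F : Type*} [NormedAddCommGroup F] [NormedSpace ℝ F]
    (E : EuclideanSpace ℝ (Fin 3) ≃ₗᵢ[ℝ] EuclideanSpace ℝ (Fin 3))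
    (g h : EuclideanSpace ℝ (Fin 3) → F) (hgh : ∀ z, g (E z) = h z)
    (z v : EuclideanSpace ℝ (Fin 3)) :
    fderiv ℝ g (E z) (E v) = fderiv ℝ h z v := by
  have hc : g ∘ (E.toContinuousLinearEquiv : _ ≃L[ℝ] _) = h := funext fun w => hgh w
  have hd := (E.toContinuousLinearEquiv).comp_right_fderiv (f := g) (x := z)
  rw [hc] at hd
  rw [hd]; rfl

lemma perm_single (e : Fin 3 ≃ Fin 3) (i : Fin 3) :
    (LinearIsometryEquiv.piLpCongrLeft 2 ℝ ℝ e) (EuclideanSpace.single i (1:ℝ))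
      = EuclideanSpace.single (e i) 1 := by
  ext k
  rw [LinearIsometryEquiv.piLpCongrLeft_apply]
  simp [Equiv.piCongrLeft'_apply, EuclideanSpace.single_apply, Equiv.symm_apply_eq, Pi.single_apply]

/-- Index-independence of the non-vanishing fourth moments in the proof of Theorem 5.7:
for distinct horizontal indices `α ≠ β` and `γ ≠ δ` and any vertical indices `i, j`, the
integrals `∫ P(1-s, x, z) · x_α² x_β² · ∂_{z_i}² P(s, x, z) d(x, z)` agree. -/
theorem integral_xsq_xsq_dzdz_bggKernel_index_independent
    (n : ℕ) (hn : 1 ≤ n) (s : ℝ) (hs0 : 0 < s) (hs1 : s < 1)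
    (α β γ δ : Fin (4 * n)) (hαβ : α ≠ β) (hγδ : γ ≠ δ) (i j : Fin 3) :
    (∫ p : EuclideanSpace ℝ (Fin (4 * n)) × EuclideanSpace ℝ (Fin 3),
      bggKernel n (1 - s) p.1 p.2 * (p.1 α : ℂ) ^ 2 * (p.1 β : ℂ) ^ 2 *
        fderiv ℝ (fun z => fderiv ℝ (fun z' => bggKernel n s p.1 z') z
            (EuclideanSpace.single i 1)) p.2 (EuclideanSpace.single i 1))
    = ∫ p : EuclideanSpace ℝ (Fin (4 * n)) × EuclideanSpace ℝ (Fin 3),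
      bggKernel n (1 - s) p.1 p.2 * (p.1 γ : ℂ) ^ 2 * (p.1 δ : ℂ) ^ 2 *
        fderiv ℝ (fun z => fderiv ℝ (fun z' => bggKernel n s p.1 z') z
            (EuclideanSpace.single j 1)) p.2 (EuclideanSpace.single j 1) := by
  classical
  -- permutation of horizontal indices sending α ↦ γ and β ↦ δ
  set σ : Fin (4 * n) ≃ Fin (4 * n) :=
    (Equiv.swap α γ).trans (Equiv.swap ((Equiv.swap α γ) β) δ) with hσ
  have hβγ : (Equiv.swap α γ) β ≠ γ := by
    intro h
    exact hαβ ((Equiv.swap α γ).injective (by rw [h, Equiv.swap_apply_left])).symm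
  have hσα : σ α = γ := by
    rw [hσ]
    simp only [Equiv.trans_apply, Equiv.swap_apply_left]
    exact Equiv.swap_apply_of_ne_of_ne (Ne.symm hβγ) hγδ
  have hσβ : σ β = δ := by
    rw [hσ]
    simp only [Equiv.trans_apply, Equiv.swap_apply_left]
  set X : EuclideanSpace ℝ (Fin (4 * n)) ≃ₗᵢ[ℝ] EuclideanSpace ℝ (Fin (4 * n)) :=
    LinearIsometryEquiv.piLpCongrLeft 2 ℝ ℝ σ with hX
  set E : EuclideanSpace ℝ (Fin 3) ≃ₗᵢ[ℝ] EuclideanSpace ℝ (Fin 3) :=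
    LinearIsometryEquiv.piLpCongrLeft 2 ℝ ℝ (Equiv.swap i j) with hE
  have hEsingle : E (EuclideanSpace.single i (1:ℝ)) = EuclideanSpace.single j 1 := by
    rw [hE, perm_single, Equiv.swap_apply_left]
  -- the measure preserving change of variables
  have hT : MeasurePreserving
      (fun p : EuclideanSpace ℝ (Fin (4 * n)) × EuclideanSpace ℝ (Fin 3) =>
        (X p.1, E p.2)) volume volume := by
    exact X.measurePreserving.prod E.measurePreserving
  have hemb : MeasurableEmbedding
      (fun p : EuclideanSpace ℝ (Fin (4 * n)) × EuclideanSpace ℝ (Fin 3) =>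
        (X p.1, E p.2)) :=
    (MeasurableEquiv.prodCongr X.toHomeomorph.toMeasurableEquiv
      E.toHomeomorph.toMeasurableEquiv).measurableEmbedding
  rw [← hT.integral_comp hemb
    (fun p : EuclideanSpace ℝ (Fin (4 * n)) × EuclideanSpace ℝ (Fin 3) =>
      bggKernel n (1 - s) p.1 p.2 * (p.1 γ : ℂ) ^ 2 * (p.1 δ : ℂ) ^ 2 *
        fderiv ℝ (fun z => fderiv ℝ (fun z' => bggKernel n s p.1 z') z
            (EuclideanSpace.single j 1)) p.2 (EuclideanSpace.single j 1))]
  congr 1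
  funext p
  obtain ⟨x, z⟩ := p
  simp only
  -- coordinates of X x
  have hXγ : (X x) γ = x α := by
    rw [hX, LinearIsometryEquiv.piLpCongrLeft_apply, Equiv.piCongrLeft'_apply,
      ← hσα, Equiv.symm_apply_apply]
  have hXδ : (X x) δ = x β := by
    rw [hX, LinearIsometryEquiv.piLpCongrLeft_apply, Equiv.piCongrLeft'_apply,
      ← hσβ, Equiv.symm_apply_apply]
  -- kernel invariance under X in x
  have hker : ∀ t (w : EuclideanSpace ℝ (Fin 3)),
      bggKernel n t (X x) w = bggKernel n t x w := fun t w =>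
    bgg_norm_congr (X.norm_map x) w
  have hker2 : bggKernel n (1 - s) (X x) (E z) = bggKernel n (1 - s) x z := by
    rw [hker, bgg_isometry]
  -- derivative term
  have hstep1 : ∀ w, fderiv ℝ (fun z' => bggKernel n s x z') (E w)
      (EuclideanSpace.single j 1)
      = fderiv ℝ (fun z' => bggKernel n s x z') w (EuclideanSpace.single i 1) := by
    intro w
    have h := fderiv_comp_isom E (fun z' => bggKernel n s x z') (fun z' => bggKernel n s x z')
      (fun z' => bgg_isometry n s x E z') w
      (EuclideanSpace.single i 1)
    rwa [hEsingle] at h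
  have hstep2 : fderiv ℝ (fun w => fderiv ℝ (fun z' => bggKernel n s x z') w
        (EuclideanSpace.single j 1)) (E z) (EuclideanSpace.single j 1)
      = fderiv ℝ (fun w => fderiv ℝ (fun z' => bggKernel n s x z') w
        (EuclideanSpace.single i 1)) z (EuclideanSpace.single i 1) := by
    have h := fderiv_comp_isom E
      (fun w => fderiv ℝ (fun z' => bggKernel n s x z') w (EuclideanSpace.single j 1))
      (fun w => fderiv ℝ (fun z' => bggKernel n s x z') w (EuclideanSpace.single i 1))
      hstep1 z (EuclideanSpace.single i 1)
    rwa [hEsingle] at h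
  simp only [hker, bgg_isometry, hXγ, hXδ, hstep2]
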